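/- Let f : ℝⁿ → ℝ be measurable, nonnegative, and positively homogeneous of degree d > 0, with bounded sublevel set G = {x : f(x) ≤ 1}. Then ∫_G f(x) dx = (n/(n+d)) · vol(G), where vol denotes Lebesgue measure. -/

import Mathlib

open MeasureTheory Pointwise

/-- For `f` measurable, nonnegative, positively homogeneous of degree `d > 0` with
bounded sublevel set `G = {f ≤ 1}`, one has `∫_G f = (n/(n+d)) · vol(G)`. -/
theorem integral_f_eq (n : ℕ) (hn : 0 < n) (d : ℝ) (hd : 0 < d)
    (f : (Fin n → ℝ) → ℝ) (hmeas : Measurable f) (hpos : ∀ x, 0 ≤ f x)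
    (hhom : ∀ c : ℝ, 0 < c → ∀ x, f (c • x) = c ^ d * f x)
    (hbdd : Bornology.IsBounded {x : Fin n → ℝ | f x ≤ 1}) :
    ∫ x in {x : Fin n → ℝ | f x ≤ 1}, f x =
      ((n : ℝ) / ((n : ℝ) + d)) * (volume {x : Fin n → ℝ | f x ≤ 1}).toReal := by
  set G : Set (Fin n → ℝ) := {x | f x ≤ 1} with hG
  have mG : MeasurableSet G := hmeas measurableSet_Iic
  have hVfin : volume G ≠ ⊤ := hbdd.measure_lt_top.ne
  set V : ℝ := (volume G).toReal with hV
  have hVnn : 0 ≤ V := ENNReal.toReal_nonneg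
  set p : ℝ := (n : ℝ) / d with hp
  have hppos : 0 < p := div_pos (Nat.cast_pos.mpr hn) hd
  -- scaling lemma
  have hscale : ∀ t : ℝ, 0 < t →
      volume {x : Fin n → ℝ | f x ≤ t} = ENNReal.ofReal (t ^ p) * volume G := by
    intro t ht
    have hc : (0:ℝ) < t ^ (1/d) := Real.rpow_pos_of_pos ht _
    have hcd : ((t ^ (1/d))⁻¹ : ℝ) ^ d = t⁻¹ := by
      rw [Real.inv_rpow hc.le, ← Real.rpow_mul ht.le, one_div,
        inv_mul_cancel₀ hd.ne', Real.rpow_one]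
    have hset : {x : Fin n → ℝ | f x ≤ t} = (t ^ (1/d)) • G := by
      ext x
      rw [Set.mem_smul_set_iff_inv_smul_mem₀ hc.ne']
      have hh := hhom ((t ^ (1/d))⁻¹) (inv_pos.mpr hc) x
      simp only [hG, Set.mem_setOf_eq, hh, hcd]
      rw [inv_mul_le_iff₀ ht, mul_one]
    rw [hset, Measure.addHaar_smul_of_nonneg volume hc.le]
    congr 2
    rw [Module.finrank_fin_fun, ← Real.rpow_natCast (t ^ (1/d)) n,
      ← Real.rpow_mul ht.le, hp]
    ring_nf
  -- integrability of f on G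
  have hint : Integrable f (volume.restrict G) := by
    have : IsFiniteMeasure (volume.restrict G) :=
      ⟨by rwa [Measure.restrict_apply_univ, lt_top_iff_ne_top]⟩
    refine Integrable.mono' (integrable_const 1) (hmeas.aestronglyMeasurable) ?_
    filter_upwards [ae_restrict_mem mG] with x hx
    rw [Real.norm_eq_abs, abs_of_nonneg (hpos x)]
    exact hx
  -- layer cake
  rw [hint.integral_eq_integral_meas_lt (Filter.Eventually.of_forall hpos)]
  -- identify the integrand
  have key : ∀ t ∈ Set.Ioi (0:ℝ),
      ((volume.restrict G) {a | t < f a}).toReal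
        = Set.indicator (Set.Ioc (0:ℝ) 1) (fun t => V - V * t ^ p) t := by
    intro t ht
    rw [Set.mem_Ioi] at ht
    rw [Measure.restrict_apply (measurableSet_lt measurable_const hmeas)]
    by_cases h1 : t ≤ 1
    · have hsub : {x : Fin n → ℝ | f x ≤ t} ⊆ G := fun x hx => le_trans hx h1
      have hdiff : {a | t < f a} ∩ G = G \ {x | f x ≤ t} := by
        ext x; simp only [Set.mem_inter_iff, Set.mem_setOf_eq, Set.mem_diff, hG, not_le]
        tauto
      rw [hdiff, measure_diff hsub (hmeas measurableSet_Iic).nullMeasurableSet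
          (ne_top_of_le_ne_top hVfin (measure_mono hsub)),
        Set.indicator_of_mem (Set.mem_Ioc.mpr ⟨ht, h1⟩), hscale t ht,
        ENNReal.toReal_sub_of_le (by
          rw [← hscale t ht]; exact measure_mono hsub)
          hVfin,
        ENNReal.toReal_mul, ENNReal.toReal_ofReal (Real.rpow_nonneg ht.le _)]
      ring
    · have : {a | t < f a} ∩ G = ∅ := by
        ext x; simp only [Set.mem_inter_iff, Set.mem_setOf_eq, hG, Set.mem_empty_iff_false,
          iff_false, not_and, not_le]
        intro hx; linarith
      rw [this, Set.indicator_of_notMem (by simp [Set.mem_Ioc]; intro; linarith)]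
      simp
  rw [setIntegral_congr_fun measurableSet_Ioi
    (show ∀ t ∈ Set.Ioi (0:ℝ), (volume.restrict G).real {a | t < f a} = _ from key)]
  -- compute the integral of the indicator
  rw [integral_indicator measurableSet_Ioc, Measure.restrict_restrict measurableSet_Ioc,
    show Set.Ioc (0:ℝ) 1 ∩ Set.Ioi 0 = Set.Ioc 0 1 by
      rw [Set.inter_eq_left]; exact fun x hx => hx.1]
  rw [← intervalIntegral.integral_of_le (zero_le_one)]
  have hrpow : ∫ t in (0:ℝ)..1, t ^ p = 1 / (p + 1) := by
    rw [integral_rpow (Or.inl (by linarith))]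
    rw [Real.one_rpow, Real.zero_rpow (by linarith)]
    ring
  have : ∫ t in (0:ℝ)..1, (V - V * t ^ p) = V - V * (1 / (p + 1)) := by
    rw [intervalIntegral.integral_sub intervalIntegrable_const
        ((intervalIntegral.intervalIntegrable_rpow (Or.inl hppos.le)).const_mul V),
      intervalIntegral.integral_const_mul, hrpow]
    simp
  rw [this]
  have hnd : (n:ℝ) + d ≠ 0 := by positivity
  have hdne : d ≠ 0 := hd.ne'
  field_simp [hp]
  have hpd : p * d = n := by rw [hp, div_mul_cancel₀ _ hdne]
  linear_combination V * hpd
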